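/- A point (Ẽ, Q̃) with (Ẽ, Q̃) ≠ (E₀, Q₀), 0 ≤ Ẽ < E₀, 0 ≤ Q̃ < Q₀ is reachable from (E₀, Q₀) by some admissible power schedule p : [0,T] → [0, p_max] if and only if the line r = K·p with K = (Q₀ - Q̃)/(E₀ - Ẽ) intersects the curve r = log₂(1+p) at some p ∈ (0, p_max]. -/

import Mathlib

open MeasureTheory

/-- A point (Et, Qt) with 0 ≤ Et < E₀, 0 ≤ Qt < Q₀ is reachable from (E₀, Q₀) by an
admissible schedule iff the line r = K·p, K = (Q₀ - Qt)/(E₀ - Et), intersects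
r = log₂(1+p) at some p ∈ (0, p_max]. -/
theorem reachable_iff_RPE (E₀ Q₀ pmax : ℝ)
    (hE₀ : 0 < E₀) (hQ₀ : 0 < Q₀) (hpmax : 0 < pmax)
    (Et Qt : ℝ) (hEt : 0 ≤ Et) (hEt' : Et < E₀) (hQt : 0 ≤ Qt) (hQt' : Qt < Q₀) :
    (∃ T : ℝ, 0 ≤ T ∧ ∃ p : ℝ → ℝ,
        (∀ t ∈ Set.Icc 0 T, p t ∈ Set.Icc 0 pmax) ∧
        IntegrableOn p (Set.Icc 0 T) ∧
        (∫ t in Set.Icc 0 T, p t) = E₀ - Et ∧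
        (∫ t in Set.Icc 0 T, Real.logb 2 (1 + p t)) = Q₀ - Qt) ↔
    (∃ p : ℝ, p ∈ Set.Ioc 0 pmax ∧
        ((Q₀ - Qt) / (E₀ - Et)) * p = Real.logb 2 (1 + p)) := by
  have hD : 0 < E₀ - Et := sub_pos.mpr hEt'
  have hR : 0 < Q₀ - Qt := sub_pos.mpr hQt'
  set K : ℝ := (Q₀ - Qt) / (E₀ - Et) with hKdef
  have hKpos : 0 < K := div_pos hR hD
  constructor
  · rintro ⟨T, hT, p, hbound, hint, hE, hQ⟩
    by_contra hno
    push_neg at hno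
    set h : ℝ → ℝ := fun x => Real.logb 2 (1 + x) - K * x with hh
    have hne : ∀ x ∈ Set.Ioc (0:ℝ) pmax, h x ≠ 0 := by
      intro x hx hx0
      exact hno x hx (by simp only [hh] at hx0; linarith [sub_eq_zero.mp hx0])
    -- continuity of h on Ici 0
    have hcont : ContinuousOn h (Set.Ici (0:ℝ)) := by
      intro x hx
      apply ContinuousAt.continuousWithinAt
      apply ContinuousAt.sub
      · exact (Real.continuousAt_logb (by simp at hx; positivity)).comp
          (by fun_prop)
      · fun_prop
    -- sign dichotomy
    have hdich : (∀ x ∈ Set.Ioc (0:ℝ) pmax, 0 < h x) ∨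
        (∀ x ∈ Set.Ioc (0:ℝ) pmax, h x < 0) := by
      have hpm : pmax ∈ Set.Ioc (0:ℝ) pmax := ⟨hpmax, le_refl _⟩
      have aux : ∀ a b, a ∈ Set.Ioc (0:ℝ) pmax → b ∈ Set.Ioc (0:ℝ) pmax →
          0 < h a → h b < 0 → False := by
        intro a b ha hb hha hhb
        have hsub : Set.uIcc a b ⊆ Set.Ioc (0:ℝ) pmax := by
          rw [Set.uIcc_eq_union]
          rintro x (hx | hx)
          · exact ⟨lt_of_lt_of_le ha.1 hx.1, le_trans hx.2 hb.2⟩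
          · exact ⟨lt_of_lt_of_le hb.1 hx.1, le_trans hx.2 ha.2⟩
        have hmem : (0:ℝ) ∈ Set.uIcc (h a) (h b) :=
          Set.mem_uIcc.mpr (Or.inr ⟨le_of_lt hhb, le_of_lt hha⟩)
        obtain ⟨c, hc, hc0⟩ := intermediate_value_uIcc
          (hcont.mono (fun x hx => le_of_lt (hsub hx).1)) hmem
        exact hne c (hsub hc) hc0
      rcases lt_or_gt_of_ne (hne pmax hpm) with hp | hp
      · right
        intro x hx
        by_contra hxp
        push_neg at hxp
        exact aux x pmax hx hpm (lt_of_le_of_ne hxp (Ne.symm (hne x hx))) hp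
      · left
        intro x hx
        by_contra hxp
        push_neg at hxp
        exact aux pmax x hpm hx hp (lt_of_le_of_ne hxp (hne x hx))
    -- integrability of the rate integrand
    have hintlog : IntegrableOn (fun t => Real.logb 2 (1 + p t)) (Set.Icc 0 T) := by
      by_contra hni
      rw [integral_undef hni] at hQ
      linarith
    obtain ⟨ε, hεcases, hsgn⟩ : ∃ ε : ℝ, (ε = 1 ∨ ε = -1) ∧
        ∀ x ∈ Set.Ioc (0:ℝ) pmax, 0 < ε * h x := by
      rcases hdich with hd | hd
      · exact ⟨1, Or.inl rfl, fun x hx => by simpa using hd x hx⟩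
      · exact ⟨-1, Or.inr rfl, fun x hx => by simpa using hd x hx⟩
    set g : ℝ → ℝ := fun t => ε * (Real.logb 2 (1 + p t) - K * p t) with hg
    have hgint : IntegrableOn g (Set.Icc 0 T) :=
      (hintlog.sub (hint.const_mul K)).const_mul ε
    have hKE : K * (E₀ - Et) = Q₀ - Qt := div_mul_cancel₀ _ (ne_of_gt hD)
    have hgval : ∫ t in Set.Icc 0 T, g t = 0 := by
      simp only [hg]
      rw [MeasureTheory.integral_const_mul, integral_sub hintlog (hint.const_mul K), hQ,
        MeasureTheory.integral_const_mul, hE, hKE]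
      ring
    have hnonneg : 0 ≤ᵐ[volume.restrict (Set.Icc 0 T)] g := by
      refine (ae_restrict_iff' measurableSet_Icc).mpr
        (Filter.Eventually.of_forall (fun t ht => ?_))
      simp only [Pi.zero_apply]
      rcases eq_or_lt_of_le (hbound t ht).1 with h0 | h0
      · simp [hg, ← h0]
      · exact le_of_lt (hsgn (p t) ⟨h0, (hbound t ht).2⟩)
    have hg0 : g =ᵐ[volume.restrict (Set.Icc 0 T)] 0 :=
      (integral_eq_zero_iff_of_nonneg_ae hnonneg hgint).mp hgval
    have hp0 : p =ᵐ[volume.restrict (Set.Icc 0 T)] 0 := by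
      filter_upwards [hg0, ae_restrict_mem measurableSet_Icc] with t hgt hmem
      by_contra hpt
      have hppos : 0 < p t := lt_of_le_of_ne (hbound t hmem).1 (Ne.symm hpt)
      exact (ne_of_gt (hsgn (p t) ⟨hppos, (hbound t hmem).2⟩)) hgt
    have hz : ∫ t in Set.Icc 0 T, p t = 0 := integral_eq_zero_of_ae hp0
    linarith
  · rintro ⟨q, ⟨hq0, hqm⟩, hqe⟩
    refine ⟨(E₀ - Et) / q, le_of_lt (div_pos hD hq0), fun _ => q, ?_, ?_, ?_, ?_⟩
    · intro t _; exact ⟨le_of_lt hq0, hqm⟩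
    · exact integrableOn_const (by rw [Real.volume_Icc]; exact ENNReal.ofReal_ne_top)
    · rw [setIntegral_const, Real.volume_real_Icc_of_le (by linarith [div_pos hD hq0]), smul_eq_mul, sub_zero]
      field_simp
    · rw [setIntegral_const, Real.volume_real_Icc_of_le (by linarith [div_pos hD hq0]), smul_eq_mul]
      rw [← hqe, hKdef]
      field_simp
      ring
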